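/- arXiv:1201.3174 — 2 statements merged into one kernel-verified Lean document; each statement's English description precedes it below -/
import Mathlib

section
/- The map φ: a ↦ a·ā from the generators of the graph group G(Σ,I) to the right-angled Coxeter group C(Γ, I_Γ), where Γ = Σ ∪ Σ̄ is a doubled alphabet, induces an injective group homomorphism G(Σ,I) → C(Γ, I_Γ). -/
/-- The defining relators of the graph group (right-angled Artin group) `G(Σ, I)`. -/
def ggRels {S : Type*} (I : S → S → Prop) : Set (FreeGroup S) :=
  {r | ∃ a b : S, I a b ∧
        r = FreeGroup.of a * FreeGroup.of b * (FreeGroup.of a)⁻¹ * (FreeGroup.of b)⁻¹}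

/-- The defining relators of the right-angled Coxeter group `C(Γ, J)`. -/
def racRels {T : Type*} (J : T → T → Prop) : Set (FreeGroup T) :=
  {r | ∃ a : T, r = FreeGroup.of a * FreeGroup.of a} ∪
  {r | ∃ a b : T, J a b ∧
        r = FreeGroup.of a * FreeGroup.of b * (FreeGroup.of a)⁻¹ * (FreeGroup.of b)⁻¹}

/-- The independence relation `I_Γ` on the doubled alphabet `Γ = Σ ∪ Σ̄` (realized as
`Σ ⊕ Σ`, with `inl a = a` and `inr a = ā`): two letters of `Γ` are independent iff the
underlying letters of `Σ` are `I`-independent. -/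
def doubleI {S : Type*} (I : S → S → Prop) : (S ⊕ S) → (S ⊕ S) → Prop :=
  fun x y => I (Sum.elim id id x) (Sum.elim id id y)

namespace GraphEmbedAux

open Function

/-- In a presented group, any relator equals `1`. -/
lemma relOne {T : Type*} {rels : Set (FreeGroup T)} {r : FreeGroup T} (h : r ∈ rels) :
    (QuotientGroup.mk r : PresentedGroup rels) = 1 :=
  (QuotientGroup.eq_one_iff r).2 (Subgroup.subset_normalClosure h)

lemma comm_of_rel {T : Type*} {rels : Set (FreeGroup T)} {a b : T}
    (h : FreeGroup.of a * FreeGroup.of b * (FreeGroup.of a)⁻¹ * (FreeGroup.of b)⁻¹ ∈ rels) :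
    Commute (PresentedGroup.of a : PresentedGroup rels) (PresentedGroup.of b) := by
  rw [← commutatorElement_eq_one_iff_commute]
  have := relOne h
  simp only [commutatorElement_def]
  exact this

variable {S : Type*} (I : S → S → Prop)

lemma ggComm {a b : S} (h : I a b) :
    Commute (PresentedGroup.of a : PresentedGroup (ggRels I)) (PresentedGroup.of b) :=
  comm_of_rel ⟨a, b, h, rfl⟩

lemma racComm {x y : S ⊕ S} (h : doubleI I x y) :
    Commute (PresentedGroup.of x : PresentedGroup (racRels (doubleI I)))
      (PresentedGroup.of y) :=
  comm_of_rel (Or.inr ⟨x, y, h, rfl⟩)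

open scoped Classical

/-- The group element by which the letter `a` (of the doubled alphabet) acts,
given the current parity `v`. -/
noncomputable def cfun (a : S) (v : Bool) : PresentedGroup (ggRels I) :=
  if v then (PresentedGroup.of a)⁻¹ else PresentedGroup.of a

lemma cfun_comm {a b : S} (h : I a b) (u v : Bool) :
    Commute (cfun I a u) (cfun I b v) := by
  have H := ggComm I h
  cases u <;> cases v <;> simp only [cfun, if_true, if_false, Bool.false_eq_true] <;>
    first
      | exact H
      | exact H.inv_right
      | exact H.inv_left
      | exact H.inv_left.inv_right

/-- The state space: an element of the graph group together with a parity per letter. -/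
abbrev XX := PresentedGroup (ggRels I) × (S → Bool)

/-- Action of the letter `inl a`. -/
noncomputable def sFun (a : S) : XX I → XX I :=
  fun p => (p.1 * cfun I a (p.2 a), Function.update p.2 a (!p.2 a))

/-- Action of the letter `inr a`. -/
noncomputable def tFun (a : S) : XX I → XX I :=
  fun p => (p.1, Function.update p.2 a (!p.2 a))

lemma sInv (a : S) : Function.Involutive (sFun I a) := by
  rintro ⟨g, f⟩
  simp only [sFun, Function.update_self, Function.update_idem, Bool.not_not]
  rw [Function.update_eq_self]
  cases hf : f a <;> simp [cfun, hf, mul_assoc]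

lemma tInv (a : S) : Function.Involutive (tFun I a) := by
  rintro ⟨g, f⟩
  simp only [tFun, Function.update_self, Function.update_idem, Bool.not_not]
  rw [Function.update_eq_self]

lemma ss_comm {a b : S} (hab : a ≠ b) (h : I a b) (p : XX I) :
    sFun I a (sFun I b p) = sFun I b (sFun I a p) := by
  obtain ⟨g, f⟩ := p
  simp only [sFun, Function.update_of_ne hab, Function.update_of_ne hab.symm]
  refine Prod.ext ?_ ?_
  · simp only [mul_assoc]
    rw [(cfun_comm I h (f a) (f b)).eq]
  · exact Function.update_comm hab.symm _ _ _

lemma st_comm {a b : S} (hab : a ≠ b) (p : XX I) :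
    sFun I a (tFun I b p) = tFun I b (sFun I a p) := by
  obtain ⟨g, f⟩ := p
  simp only [sFun, tFun, Function.update_of_ne hab, Function.update_of_ne hab.symm]
  refine Prod.ext rfl ?_
  exact Function.update_comm hab.symm _ _ _

lemma tt_comm {a b : S} (hab : a ≠ b) (p : XX I) :
    tFun I a (tFun I b p) = tFun I b (tFun I a p) := by
  obtain ⟨g, f⟩ := p
  simp only [tFun, Function.update_of_ne hab, Function.update_of_ne hab.symm]
  refine Prod.ext rfl ?_
  exact Function.update_comm hab.symm _ _ _

/-- The permutation of the state space associated to a letter of the doubled alphabet. -/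
noncomputable def fGen (x : S ⊕ S) : Equiv.Perm (XX I) :=
  Sum.elim (fun a => Function.Involutive.toPerm _ (sInv I a))
    (fun a => Function.Involutive.toPerm _ (tInv I a)) x

lemma fGen_sq (x : S ⊕ S) : fGen I x * fGen I x = 1 := by
  refine Equiv.ext fun p => ?_
  cases x <;>
    simp only [fGen, Sum.elim_inl, Sum.elim_inr, Equiv.Perm.mul_apply,
      Function.Involutive.coe_toPerm, Equiv.Perm.one_apply]
  · exact sInv I _ p
  · exact tInv I _ p

lemma fGen_comm (hirr : ∀ a, ¬ I a a) (hsym : ∀ a b, I a b → I b a)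
    {x y : S ⊕ S} (h : doubleI I x y) :
    Commute (fGen I x) (fGen I y) := by
  have hne : ∀ {a b : S}, I a b → a ≠ b := fun {a b} hI e => hirr b (e ▸ hI)
  refine Equiv.ext fun p => ?_
  cases x <;> cases y <;>
    simp only [fGen, Sum.elim_inl, Sum.elim_inr, Equiv.Perm.mul_apply,
      Function.Involutive.coe_toPerm]
  · exact ss_comm I (hne h) h _
  · exact st_comm I (hne h) _
  · exact (st_comm I (Ne.symm (hne h)) _).symm
  · exact tt_comm I (hne h) _

end GraphEmbedAux

/-- The map `φ : a ↦ a·ā` induces an injective group homomorphism from the graph group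
`G(Σ, I)` into the right-angled Coxeter group `C(Γ, I_Γ)` on the doubled alphabet. -/
theorem graphGroup_embeds_in_racGroup {S : Type*}
    (I : S → S → Prop) (hirr : ∀ a, ¬ I a a) (hsym : ∀ a b, I a b → I b a) :
    ∃ φ : PresentedGroup (ggRels I) →* PresentedGroup (racRels (doubleI I)),
      Function.Injective φ ∧
      ∀ a : S, φ (PresentedGroup.of a) =
        PresentedGroup.of (Sum.inl a) * PresentedGroup.of (Sum.inr a) := by
  classical
  open GraphEmbedAux in
  -- the homomorphism φ
  have hφ : ∀ r ∈ ggRels I,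
      (FreeGroup.lift (fun a : S =>
        (PresentedGroup.of (Sum.inl a) * PresentedGroup.of (Sum.inr a) :
          PresentedGroup (racRels (doubleI I))))) r = 1 := by
    rintro r ⟨a, b, hab, rfl⟩
    have hc : Commute
        (PresentedGroup.of (Sum.inl a) * PresentedGroup.of (Sum.inr a) :
          PresentedGroup (racRels (doubleI I)))
        (PresentedGroup.of (Sum.inl b) * PresentedGroup.of (Sum.inr b)) := by
      have h1 : doubleI I (Sum.inl a) (Sum.inl b) := hab
      have h2 : doubleI I (Sum.inl a) (Sum.inr b) := hab
      have h3 : doubleI I (Sum.inr a) (Sum.inl b) := hab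
      have h4 : doubleI I (Sum.inr a) (Sum.inr b) := hab
      exact ((racComm I h1).mul_right (racComm I h2)).mul_left
        ((racComm I h3).mul_right (racComm I h4))
    rw [← commutatorElement_eq_one_iff_commute] at hc
    simpa [commutatorElement_def] using hc
  set φ : PresentedGroup (ggRels I) →* PresentedGroup (racRels (doubleI I)) :=
    PresentedGroup.toGroup hφ with hφdef
  have hφof : ∀ a : S, φ (PresentedGroup.of a) =
      PresentedGroup.of (Sum.inl a) * PresentedGroup.of (Sum.inr a) := fun a =>
    PresentedGroup.toGroup.of hφ
  -- the homomorphism ψ into permutations of the state space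
  have hψ : ∀ r ∈ racRels (doubleI I), (FreeGroup.lift (fGen I)) r = 1 := by
    rintro r (⟨x, rfl⟩ | ⟨x, y, hxy, rfl⟩)
    · simpa [map_mul] using fGen_sq I x
    · have hc := fGen_comm I hirr hsym hxy
      rw [← commutatorElement_eq_one_iff_commute] at hc
      simpa [commutatorElement_def] using hc
  set ψ : PresentedGroup (racRels (doubleI I)) →* Equiv.Perm (XX I) :=
    PresentedGroup.toGroup hψ with hψdef
  have hψof : ∀ x : S ⊕ S, ψ (PresentedGroup.of x) = fGen I x := fun x =>
    PresentedGroup.toGroup.of hψ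
  -- key computation
  have key : ∀ w : PresentedGroup (ggRels I), ∀ g : PresentedGroup (ggRels I),
      (ψ (φ w)) (g, fun _ => false) = (g * w⁻¹, fun _ => false) := by
    intro w
    refine QuotientGroup.induction_on w ?_
    intro z
    let mk' : FreeGroup S → PresentedGroup (ggRels I) := fun u => QuotientGroup.mk u
    show ∀ g : PresentedGroup (ggRels I),
        (ψ (φ (mk' z))) (g, fun _ => false) = (g * (mk' z)⁻¹, fun _ => false)
    refine FreeGroup.induction_on
      (C := fun z => ∀ g : PresentedGroup (ggRels I),
        (ψ (φ (mk' z))) (g, fun _ => false) = (g * (mk' z)⁻¹, fun _ => false))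
      z ?_ ?_ ?_ ?_
    · intro g
      have h1 : mk' 1 = 1 := rfl
      rw [h1]; simp
    · intro x g
      have h1 : mk' (FreeGroup.of x) = PresentedGroup.of x := rfl
      rw [h1, hφof, map_mul, hψof, hψof, Equiv.Perm.mul_apply]
      simp only [fGen, Sum.elim_inl, Sum.elim_inr, Function.Involutive.coe_toPerm,
        tFun, sFun]
      refine Prod.ext ?_ ?_
      · simp [cfun, Function.update_self]
      · simp only [Function.update_self, Function.update_idem, Bool.not_true]
        exact Function.update_eq_self x _
    · intro x _ g
      have h1 : mk' ((FreeGroup.of x)⁻¹) = (PresentedGroup.of x)⁻¹ := rfl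
      rw [h1, map_inv, hφof, map_inv, map_mul, hψof, hψof, mul_inv_rev]
      have hsinv : (fGen I (Sum.inl x))⁻¹ = fGen I (Sum.inl x) :=
        inv_eq_of_mul_eq_one_left (fGen_sq I _)
      have htinv : (fGen I (Sum.inr x))⁻¹ = fGen I (Sum.inr x) :=
        inv_eq_of_mul_eq_one_left (fGen_sq I _)
      rw [hsinv, htinv, Equiv.Perm.mul_apply]
      simp only [fGen, Sum.elim_inl, Sum.elim_inr, Function.Involutive.coe_toPerm,
        tFun, sFun]
      refine Prod.ext ?_ ?_
      · simp [cfun]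
      · simp only [Function.update_self, Function.update_idem, Bool.not_false]
        exact Function.update_eq_self x _
    · intro u v hu hv g
      have h1 : mk' (u * v) = mk' u * mk' v := rfl
      rw [h1, map_mul, map_mul, Equiv.Perm.mul_apply, hv, hu, mul_inv_rev, mul_assoc]
  refine ⟨φ, ?_, hφof⟩
  rw [injective_iff_map_eq_one]
  intro w hw
  have h := key w 1
  rw [hw] at h
  simp only [map_one, Equiv.Perm.coe_one, id_eq, one_mul] at h
  have h1 : (1 : PresentedGroup (ggRels I)) = w⁻¹ := congrArg Prod.fst h
  rw [← inv_eq_one]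
  exact h1.symm
end

section
/- The trace rewriting system S_G = {aā → 1, āa → 1 | a ∈ Σ} on the trace monoid M(Γ, I_Γ), where Γ = Σ ∪ Σ̄, is strongly confluent and length-reducing, and its set of irreducible traces gives unique geodesic normal forms for the graph group G(Σ,I) = M(Γ,I_Γ)/S_G. -/
/-- One commutation step: exchanging two adjacent independent letters. -/
def swapStep {T : Type*} (J : T → T → Prop) (u v : List T) : Prop :=
  ∃ (p s : List T) (a b : T), J a b ∧ u = p ++ a :: b :: s ∧ v = p ++ b :: a :: s

/-- The setoid of trace equivalence. -/
def traceSetoid {T : Type*} (J : T → T → Prop) : Setoid (List T) :=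
  Relation.EqvGen.setoid (swapStep J)

/-- The trace monoid `M(Γ, J)`. -/
def Trace {T : Type*} (J : T → T → Prop) : Type _ := Quotient (traceSetoid J)

/-- The trace represented by a word. -/
def mkT {T : Type*} (J : T → T → Prop) (w : List T) : Trace J :=
  Quotient.mk (traceSetoid J) w

/-- The length of a trace. -/
def lenT {T : Type*} (J : T → T → Prop) : Trace J → ℕ :=
  Quotient.lift List.length (by
    intro u v h
    induction h with
    | rel x y hxy =>
        obtain ⟨p, s, a, b, -, hx, hy⟩ := hxy
        subst hx; subst hy; simp
    | refl x => rfl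
    | symm x y _ ih => omega
    | trans x y z _ _ ih1 ih2 => omega)

/-- One step of the trace rewriting system `S_G = {a·ā → 1, ā·a → 1 | a ∈ Σ}` on the
trace monoid `M(Γ, I_Γ)`. -/
def RwG {S : Type*} (I : S → S → Prop) (x y : Trace (doubleI I)) : Prop :=
  ∃ (a : S) (u v : List (S ⊕ S)),
    (x = mkT (doubleI I) (u ++ Sum.inl a :: Sum.inr a :: v) ∨
     x = mkT (doubleI I) (u ++ Sum.inr a :: Sum.inl a :: v)) ∧
    y = mkT (doubleI I) (u ++ v)

/-- A trace is `S_G`-irreducible iff no rule applies. -/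
def IrrG {S : Type*} (I : S → S → Prop) (x : Trace (doubleI I)) : Prop :=
  ∀ y, ¬ RwG I x y

/-- Evaluation of a word over `Γ = Σ ∪ Σ̄` in the graph group `G(Σ, I)`, sending
`a = inl a` to the generator and `ā = inr a` to its inverse. -/
def ggEval {S : Type*} (I : S → S → Prop) (w : List (S ⊕ S)) : PresentedGroup (ggRels I) :=
  (w.map (Sum.elim (fun a => PresentedGroup.of (rels := ggRels I) a)
    (fun a => (PresentedGroup.of (rels := ggRels I) a)⁻¹))).prod


namespace GGAux
open Relation List

variable {T : Type*}

theorem split3 : ∀ (p : List T) (a : T) (s q : List T) (b : T) (t : List T),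
    p ++ a :: s = q ++ b :: t →
    (p = q ∧ a = b ∧ s = t) ∨ (∃ m, q = p ++ a :: m ∧ s = m ++ b :: t) ∨
      (∃ m, p = q ++ b :: m ∧ t = m ++ a :: s)
  | [], a, s, [], b, t, h => by
      simp only [List.nil_append, List.cons.injEq] at h
      exact Or.inl ⟨rfl, h.1, h.2⟩
  | [], a, s, q₀ :: q, b, t, h => by
      simp only [List.nil_append, List.cons_append, List.cons.injEq] at h
      exact Or.inr (Or.inl ⟨q, by simp [h.1], h.2⟩)
  | p₀ :: p, a, s, [], b, t, h => by
      simp only [List.nil_append, List.cons_append, List.cons.injEq] at h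
      exact Or.inr (Or.inr ⟨p, by simp [h.1], h.2.symm⟩)
  | p₀ :: p, a, s, q₀ :: q, b, t, h => by
      simp only [List.cons_append, List.cons.injEq] at h
      rcases split3 p a s q b t h.2 with ⟨h1, h2, h3⟩ | ⟨m, h1, h2⟩ | ⟨m, h1, h2⟩
      · exact Or.inl ⟨by rw [h.1, h1], h2, h3⟩
      · exact Or.inr (Or.inl ⟨m, by rw [h.1, h1]; rfl, h2⟩)
      · exact Or.inr (Or.inr ⟨m, by rw [h.1, h1]; rfl, h2⟩)

variable {J : T → T → Prop}

theorem swapStep_append (p s : List T) {u v : List T} (h : swapStep J u v) :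
    swapStep J (p ++ u ++ s) (p ++ v ++ s) := by
  obtain ⟨q, t, a, b, hab, hu, hv⟩ := h
  exact ⟨p ++ q, t ++ s, a, b, hab, by simp [hu], by simp [hv]⟩

theorem teq_append (p s : List T) {u v : List T} (h : EqvGen (swapStep J) u v) :
    EqvGen (swapStep J) (p ++ u ++ s) (p ++ v ++ s) := by
  induction h with
  | rel x y hxy => exact EqvGen.rel _ _ (swapStep_append p s hxy)
  | refl x => exact EqvGen.refl _
  | symm x y _ ih => exact EqvGen.symm _ _ ih
  | trans x y z _ _ ih1 ih2 => exact EqvGen.trans _ _ _ ih1 ih2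

theorem mkT_eq_mkT {u v : List T} : mkT J u = mkT J v ↔ EqvGen (swapStep J) u v :=
  ⟨fun h => Quotient.exact h, fun h => Quotient.sound h⟩

/-- moving a letter left across an independent block -/
theorem teq_block (hs : ∀ a b, J a b → J b a) :
    ∀ (g : List T) (x : T) (v : List T), (∀ z ∈ g, J x z) →
      EqvGen (swapStep J) (g ++ x :: v) (x :: (g ++ v))
  | [], x, v, _ => EqvGen.refl _
  | z :: g, x, v, hall => by
      have h1 : EqvGen (swapStep J) (z :: (g ++ x :: v)) (z :: (x :: (g ++ v))) := by
        have := teq_append (J := J) [z] [] (teq_block hs g x v (fun y hy => hall y (List.mem_cons_of_mem _ hy)))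
        simpa using this
      refine EqvGen.trans _ _ _ (by simpa using h1) ?_
      exact EqvGen.rel _ _ ⟨[], g ++ v, z, x, hs x z (hall z List.mem_cons_self), rfl, rfl⟩

theorem rtg_symm {r : T → T → Prop} (hs : ∀ a b, r a b → r b a) {a b : T}
    (h : ReflTransGen r a b) : ReflTransGen r b a := by
  induction h with
  | refl => exact ReflTransGen.refl
  | tail _ hcd ih => exact ReflTransGen.trans (ReflTransGen.single (hs _ _ hcd)) ih

theorem rtg_of_eqvGen {r : T → T → Prop} (hs : ∀ a b, r a b → r b a) {a b : T}
    (h : EqvGen r a b) : ReflTransGen r a b := by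
  induction h with
  | rel x y hxy => exact ReflTransGen.single hxy
  | refl x => exact ReflTransGen.refl
  | symm x y _ ih => exact rtg_symm hs ih
  | trans x y z _ _ ih1 ih2 => exact ih1.trans ih2

theorem swapStep_symm (hs : ∀ a b, J a b → J b a) {u v : List T} (h : swapStep J u v) :
    swapStep J v u := by
  obtain ⟨p, s, a, b, hab, hu, hv⟩ := h
  exact ⟨p, s, b, a, hs _ _ hab, hv, hu⟩

end GGAux

namespace GGAux
open Relation List

variable {S : Type*} {I : S → S → Prop}

def bar : S ⊕ S → S ⊕ S := Sum.elim Sum.inr Sum.inl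

@[simp] theorem bar_bar (x : S ⊕ S) : bar (bar x) = x := by cases x <;> rfl

theorem bar_inj {x y : S ⊕ S} (h : bar x = bar y) : x = y := by
  have := congrArg bar h; simpa using this

theorem dI_bar_left (x z : S ⊕ S) : doubleI I (bar x) z = doubleI I x z := by
  cases x <;> rfl

theorem dI_bar_right (x z : S ⊕ S) : doubleI I x (bar z) = doubleI I x z := by
  cases x <;> cases z <;> rfl

theorem dI_symm (hsym : ∀ a b, I a b → I b a) {x z : S ⊕ S} (h : doubleI I x z) :
    doubleI I z x := hsym _ _ h

theorem not_dI_bar (hirr : ∀ a, ¬ I a a) (x : S ⊕ S) : ¬ doubleI I x (bar x) := by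
  cases x <;> exact hirr _

/-- one deletion of a matched pair `x … x̄` whose gap is independent of `x`. -/
def DelStep (I : S → S → Prop) (w r : List (S ⊕ S)) : Prop :=
  ∃ (u g v : List (S ⊕ S)) (x : S ⊕ S), (∀ z ∈ g, doubleI I x z) ∧
    w = u ++ x :: (g ++ bar x :: v) ∧ r = u ++ (g ++ v)

theorem teq_of_eq {T : Type*} {r : T → T → Prop} {u v : T} (h : u = v) :
    Relation.EqvGen r u v := h ▸ Relation.EqvGen.refl u

theorem delStep_transport (hirr : ∀ a, ¬ I a a) (hsym : ∀ a b, I a b → I b a)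
    {w w' r : List (S ⊕ S)} (hsw : swapStep (doubleI I) w w') (hd : DelStep I w r) :
    ∃ r', DelStep I w' r' ∧ EqvGen (swapStep (doubleI I)) r r' := by
  obtain ⟨p, s, c, d, hcd, hw, hw'⟩ := hsw
  obtain ⟨u, g, v, x, hall, hwu, hr⟩ := hd
  subst hw' hr
  have E : u ++ x :: (g ++ bar x :: v) = p ++ c :: (d :: s) := by
    rw [← hwu, hw]
  clear hwu hw
  rcases split3 u x (g ++ bar x :: v) p c (d :: s) E with
    ⟨h1, h2, h3⟩ | ⟨m, h1, h2⟩ | ⟨m, h1, h2⟩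
  · -- u = p, x = c
    subst h1; subst h2
    cases g with
    | nil =>
        simp only [List.nil_append, List.cons.injEq] at h3
        exact absurd (h3.1 ▸ hcd) (not_dI_bar hirr x)
    | cons g₀ g' =>
        simp only [List.cons_append, List.cons.injEq] at h3
        obtain ⟨h3a, h3b⟩ := h3
        subst h3a; subst h3b
        refine ⟨u ++ (g₀ :: g' ++ v), ⟨u ++ [g₀], g', v, x,
          fun z hz => hall z (List.mem_cons_of_mem _ hz), by simp, by simp⟩,
          teq_of_eq rfl⟩
  · -- p = u ++ x :: m
    subst h1
    rcases split3 g (bar x) v m c (d :: s) h2 with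
      ⟨k1, k2, k3⟩ | ⟨n, k1, k2⟩ | ⟨n, k1, k2⟩
    · -- g = m, bar x = c, v = d :: s
      subst k1
      subst k3
      have hxd : doubleI I x d := by
        have := hcd; rw [← k2, dI_bar_left] at this; exact this
      refine ⟨u ++ (g ++ (d :: s)), ⟨u, g ++ [d], s, x, ?_, by simp [← k2], by simp⟩,
        teq_of_eq rfl⟩
      intro z hz
      rcases List.mem_append.1 hz with hz | hz
      · exact hall z hz
      · simp only [List.mem_singleton] at hz; subst hz; exact hxd
    · -- m = g ++ bar x :: n, v = n ++ c :: d :: s : swap inside v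
      subst k1; subst k2
      refine ⟨u ++ (g ++ (n ++ d :: c :: s)),
        ⟨u, g, n ++ d :: c :: s, x, hall, by simp, by simp⟩, ?_⟩
      exact Relation.EqvGen.rel _ _ ⟨u ++ g ++ n, s, c, d, hcd, by simp, by simp⟩
    · -- g = m ++ c :: n
      subst k1
      cases n with
      | nil =>
          simp only [List.nil_append, List.cons.injEq] at k2
          obtain ⟨k2a, k2b⟩ := k2
          subst k2a; subst k2b
          refine ⟨u ++ (m ++ (c :: s)), ⟨u, m, c :: s, x,
            fun z hz => hall z (by simp [hz]), by simp, by simp⟩,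
            teq_of_eq (by simp)⟩
      | cons n₀ n' =>
          simp only [List.cons_append, List.cons.injEq] at k2
          obtain ⟨k2a, k2b⟩ := k2
          subst k2a; subst k2b
          have hcn : doubleI I c d := hcd
          refine ⟨u ++ ((m ++ d :: c :: n') ++ v),
            ⟨u, m ++ d :: c :: n', v, x, ?_, by simp, by simp⟩, ?_⟩
          · intro z hz
            apply hall
            simp only [List.mem_append, List.mem_cons] at hz ⊢
            tauto
          · exact Relation.EqvGen.rel _ _ ⟨u ++ m, n' ++ v, c, d, hcd, by simp, by simp⟩
  · -- u = p ++ c :: m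
    subst h1
    cases m with
    | nil =>
        simp only [List.nil_append, List.cons.injEq] at h2
        obtain ⟨h2a, h2b⟩ := h2
        subst h2a; subst h2b
        refine ⟨p ++ ((c :: g) ++ v), ⟨p, c :: g, v, d, ?_, by simp, by simp⟩,
          teq_of_eq (by simp)⟩
        intro z hz
        rcases List.mem_cons.1 hz with hz | hz
        · subst hz; exact dI_symm hsym hcd
        · exact hall z hz
    | cons m₀ m' =>
        simp only [List.cons_append, List.cons.injEq] at h2
        obtain ⟨h2a, h2b⟩ := h2
        subst h2a; subst h2b
        refine ⟨(p ++ d :: c :: m') ++ (g ++ v),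
          ⟨p ++ d :: c :: m', g, v, x, hall, by simp, by simp⟩, ?_⟩
        exact Relation.EqvGen.rel _ _ ⟨p, m' ++ (g ++ v), c, d, hcd, by simp, by simp⟩

theorem not_dI_self (hirr : ∀ a, ¬ I a a) (x : S ⊕ S) : ¬ doubleI I x x := by
  cases x <;> exact hirr _

theorem delStep_transport_teq (hirr : ∀ a, ¬ I a a) (hsym : ∀ a b, I a b → I b a)
    {w w' r : List (S ⊕ S)} (h : Relation.EqvGen (swapStep (doubleI I)) w w')
    (hd : DelStep I w r) :
    ∃ r', DelStep I w' r' ∧ Relation.EqvGen (swapStep (doubleI I)) r r' := by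
  have hs : ∀ a b : List (S ⊕ S), swapStep (doubleI I) a b → swapStep (doubleI I) b a :=
    fun a b => swapStep_symm (fun _ _ hh => dI_symm hsym hh)
  have hrtg := rtg_of_eqvGen hs h
  clear h
  induction hrtg with
  | refl => exact ⟨r, hd, Relation.EqvGen.refl _⟩
  | tail _ hbc ih =>
      obtain ⟨r', hd', ht⟩ := ih
      obtain ⟨r'', hd'', ht'⟩ := delStep_transport hirr hsym hbc hd'
      exact ⟨r'', hd'', Relation.EqvGen.trans _ _ _ ht ht'⟩

theorem rwG_of_delStep (hsym : ∀ a b, I a b → I b a) {w r : List (S ⊕ S)}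
    (h : DelStep I w r) : RwG I (mkT (doubleI I) w) (mkT (doubleI I) r) := by
  obtain ⟨u, g, v, x, hall, hw, hr⟩ := h
  subst hw hr
  have hblock : Relation.EqvGen (swapStep (doubleI I)) (g ++ bar x :: v) (bar x :: (g ++ v)) :=
    teq_block (fun a b hh => dI_symm hsym hh) g (bar x) v
      (fun z hz => (dI_bar_left x z).symm ▸ hall z hz)
  have ht : mkT (doubleI I) (u ++ x :: (g ++ bar x :: v)) =
      mkT (doubleI I) (u ++ x :: bar x :: (g ++ v)) := by
    refine mkT_eq_mkT.2 ?_
    have := teq_append (u ++ [x]) [] hblock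
    simpa using this
  cases x with
  | inl a =>
      exact ⟨a, u, g ++ v, Or.inl (by simpa [bar] using ht), rfl⟩
  | inr a =>
      exact ⟨a, u, g ++ v, Or.inr (by simpa [bar] using ht), rfl⟩

theorem delStep_of_rwG (hirr : ∀ a, ¬ I a a) (hsym : ∀ a b, I a b → I b a)
    {x z : Trace (doubleI I)} (h : RwG I x z) {w : List (S ⊕ S)}
    (hw : mkT (doubleI I) w = x) :
    ∃ r, DelStep I w r ∧ mkT (doubleI I) r = z := by
  obtain ⟨a, u, v, hx, hz⟩ := h
  subst hz
  rcases hx with hx | hx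
  · have ht : Relation.EqvGen (swapStep (doubleI I)) (u ++ Sum.inl a :: Sum.inr a :: v) w :=
      Relation.EqvGen.symm _ _ (mkT_eq_mkT.1 (hw.trans hx))
    have hd : DelStep I (u ++ Sum.inl a :: Sum.inr a :: v) (u ++ v) :=
      ⟨u, [], v, Sum.inl a, by simp, by simp [bar], by simp⟩
    obtain ⟨r', hd', ht'⟩ := delStep_transport_teq hirr hsym ht hd
    exact ⟨r', hd', (mkT_eq_mkT.2 (Relation.EqvGen.symm _ _ ht'))⟩
  · have ht : Relation.EqvGen (swapStep (doubleI I)) (u ++ Sum.inr a :: Sum.inl a :: v) w :=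
      Relation.EqvGen.symm _ _ (mkT_eq_mkT.1 (hw.trans hx))
    have hd : DelStep I (u ++ Sum.inr a :: Sum.inl a :: v) (u ++ v) :=
      ⟨u, [], v, Sum.inr a, by simp, by simp [bar], by simp⟩
    obtain ⟨r', hd', ht'⟩ := delStep_transport_teq hirr hsym ht hd
    exact ⟨r', hd', (mkT_eq_mkT.2 (Relation.EqvGen.symm _ _ ht'))⟩

theorem strong_conf_core (hirr : ∀ a, ¬ I a a) (hsym : ∀ a b, I a b → I b a)
    {u v r₂ : List (S ⊕ S)} {x : S ⊕ S}
    (hd : DelStep I (u ++ x :: bar x :: v) r₂) :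
    mkT (doubleI I) (u ++ v) = mkT (doubleI I) r₂ ∨
      ∃ y, RwG I (mkT (doubleI I) (u ++ v)) y ∧ RwG I (mkT (doubleI I) r₂) y := by
  have hsymJ : ∀ a b : S ⊕ S, doubleI I a b → doubleI I b a := fun _ _ hh => dI_symm hsym hh
  obtain ⟨u₂, g₂, v₂, x₂, hall, heq, hr₂⟩ := hd
  subst hr₂
  have E : u ++ x :: (bar x :: v) = u₂ ++ x₂ :: (g₂ ++ bar x₂ :: v₂) := by simpa using heq
  clear heq
  rcases split3 u x (bar x :: v) u₂ x₂ (g₂ ++ bar x₂ :: v₂) E with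
    ⟨h1, h2, h3⟩ | ⟨m, h1, h2⟩ | ⟨m, h1, h2⟩
  · -- u = u₂, x = x₂
    subst h1; subst h2
    cases g₂ with
    | nil =>
        simp only [List.nil_append, List.cons.injEq] at h3
        exact Or.inl (congrArg _ (by simp [h3.2]))
    | cons h g' =>
        simp only [List.cons_append, List.cons.injEq] at h3
        exact absurd (h3.1 ▸ hall h (by simp)) (not_dI_bar hirr x)
  · -- u₂ = u ++ x :: m
    subst h1
    cases m with
    | nil =>
        simp only [List.nil_append, List.cons.injEq] at h2
        obtain ⟨h2a, h2b⟩ := h2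
        subst h2b
        -- x₂ = bar x, so bar x₂ = x
        have hbx : bar x₂ = x := by rw [← h2a, bar_bar]
        refine Or.inl ?_
        refine mkT_eq_mkT.2 ?_
        have hblock : Relation.EqvGen (swapStep (doubleI I)) (g₂ ++ x :: v₂) (x :: (g₂ ++ v₂)) := by
          refine teq_block hsymJ g₂ x v₂ (fun z hz => ?_)
          have := hall z hz
          rw [← h2a, dI_bar_left] at this
          exact this
        have := teq_append u [] hblock
        simp only [List.append_nil] at this
        refine Relation.EqvGen.trans _ (u ++ (g₂ ++ x :: v₂)) _ (teq_of_eq (by rw [hbx])) (Relation.EqvGen.trans _ (u ++ x :: (g₂ ++ v₂)) _ this (teq_of_eq (by simp)))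
    | cons m₀ m' =>
        simp only [List.cons_append, List.cons.injEq] at h2
        obtain ⟨h2a, h2b⟩ := h2
        subst h2b
        refine Or.inr ⟨mkT (doubleI I) ((u ++ m') ++ (g₂ ++ v₂)), ?_, ?_⟩
        · have hD : DelStep I ((u ++ m') ++ x₂ :: (g₂ ++ bar x₂ :: v₂)) ((u ++ m') ++ (g₂ ++ v₂)) :=
            ⟨u ++ m', g₂, v₂, x₂, hall, rfl, rfl⟩
          rw [show mkT (doubleI I) (u ++ (m' ++ x₂ :: (g₂ ++ bar x₂ :: v₂))) =
              mkT (doubleI I) ((u ++ m') ++ x₂ :: (g₂ ++ bar x₂ :: v₂)) from congrArg _ (by simp)]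
          exact rwG_of_delStep hsym hD
        · have hD : DelStep I ((u ++ x :: m₀ :: m') ++ (g₂ ++ v₂)) (u ++ ([] ++ (m' ++ (g₂ ++ v₂)))) :=
            ⟨u, [], m' ++ (g₂ ++ v₂), x, by simp, by simp [← h2a], rfl⟩
          rw [show mkT (doubleI I) ((u ++ m') ++ (g₂ ++ v₂)) =
              mkT (doubleI I) (u ++ ([] ++ (m' ++ (g₂ ++ v₂)))) from congrArg _ (by simp)]
          exact rwG_of_delStep hsym hD
  · -- u = u₂ ++ x₂ :: m
    rcases split3 g₂ (bar x₂) v₂ m x (bar x :: v) h2 with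
      ⟨k1, k2, k3⟩ | ⟨n, k1, k2⟩ | ⟨n, k1, k2⟩
    · -- g₂ = m, bar x₂ = x, v₂ = bar x :: v  (shared position)
      subst h1; subst k1; subst k3
      have hbx : bar x = x₂ := by rw [← k2, bar_bar]
      refine Or.inl (mkT_eq_mkT.2 ?_)
      have hblock : Relation.EqvGen (swapStep (doubleI I)) (g₂ ++ x₂ :: v) (x₂ :: (g₂ ++ v)) :=
        teq_block hsymJ g₂ x₂ v hall
      have hmain := teq_append u₂ [] hblock
      simp only [List.append_nil] at hmain
      refine Relation.EqvGen.trans _ (u₂ ++ x₂ :: (g₂ ++ v)) _ (teq_of_eq (by simp)) ?_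
      refine Relation.EqvGen.trans _ (u₂ ++ (g₂ ++ x₂ :: v)) _
        (Relation.EqvGen.symm _ _ hmain) (teq_of_eq (by rw [hbx]))
    · -- m = g₂ ++ bar x₂ :: n (pair2 entirely left)
      subst k1; subst k2; subst h1
      refine Or.inr ⟨mkT (doubleI I) ((u₂ ++ (g₂ ++ n)) ++ v), ?_, ?_⟩
      · have hD : DelStep I (u₂ ++ x₂ :: (g₂ ++ bar x₂ :: (n ++ v))) (u₂ ++ (g₂ ++ (n ++ v))) :=
          ⟨u₂, g₂, n ++ v, x₂, hall, rfl, rfl⟩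
        rw [show mkT (doubleI I) ((u₂ ++ x₂ :: (g₂ ++ bar x₂ :: n)) ++ v) =
            mkT (doubleI I) (u₂ ++ x₂ :: (g₂ ++ bar x₂ :: (n ++ v))) from congrArg _ (by simp),
          show mkT (doubleI I) ((u₂ ++ (g₂ ++ n)) ++ v) =
            mkT (doubleI I) (u₂ ++ (g₂ ++ (n ++ v))) from congrArg _ (by simp)]
        exact rwG_of_delStep hsym hD
      · have hD : DelStep I ((u₂ ++ g₂ ++ n) ++ x :: ([] ++ bar x :: v))
            ((u₂ ++ g₂ ++ n) ++ ([] ++ v)) :=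
          ⟨u₂ ++ g₂ ++ n, [], v, x, by simp, rfl, rfl⟩
        rw [show mkT (doubleI I) (u₂ ++ (g₂ ++ (n ++ x :: bar x :: v))) =
            mkT (doubleI I) ((u₂ ++ g₂ ++ n) ++ x :: ([] ++ bar x :: v)) from congrArg _ (by simp),
          show mkT (doubleI I) ((u₂ ++ (g₂ ++ n)) ++ v) =
            mkT (doubleI I) ((u₂ ++ g₂ ++ n) ++ ([] ++ v)) from congrArg _ (by simp)]
        exact rwG_of_delStep hsym hD
    · -- g₂ = m ++ x :: n
      subst k1
      cases n with
      | nil =>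
          simp only [List.nil_append, List.cons.injEq] at k2
          have hxx : x = x₂ := bar_inj k2.1
          have : doubleI I x₂ x := hall x (by simp)
          rw [← hxx] at this
          exact absurd this (not_dI_self hirr x)
      | cons n₀ n' =>
          simp only [List.cons_append, List.cons.injEq] at k2
          obtain ⟨k2a, k2b⟩ := k2
          subst k2b; subst h1
          refine Or.inr ⟨mkT (doubleI I) (u₂ ++ ((m ++ n') ++ v₂)), ?_, ?_⟩
          · have hD : DelStep I (u₂ ++ x₂ :: ((m ++ n') ++ bar x₂ :: v₂))
                (u₂ ++ ((m ++ n') ++ v₂)) :=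
              ⟨u₂, m ++ n', v₂, x₂, ?_, rfl, rfl⟩
            · rw [show mkT (doubleI I) ((u₂ ++ x₂ :: m) ++ (n' ++ bar x₂ :: v₂)) =
                  mkT (doubleI I) (u₂ ++ x₂ :: ((m ++ n') ++ bar x₂ :: v₂)) from congrArg _ (by simp)]
              exact rwG_of_delStep hsym hD
            · intro z hz
              apply hall
              simp only [List.mem_append, List.mem_cons] at hz ⊢
              tauto
          · have hD : DelStep I ((u₂ ++ m) ++ x :: ([] ++ bar x :: (n' ++ v₂)))
                ((u₂ ++ m) ++ ([] ++ (n' ++ v₂))) :=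
              ⟨u₂ ++ m, [], n' ++ v₂, x, by simp, rfl, rfl⟩
            rw [show mkT (doubleI I) (u₂ ++ ((m ++ x :: n₀ :: n') ++ v₂)) =
                mkT (doubleI I) ((u₂ ++ m) ++ x :: ([] ++ bar x :: (n' ++ v₂))) from
                  congrArg _ (by simp [← k2a]),
              show mkT (doubleI I) (u₂ ++ ((m ++ n') ++ v₂)) =
                mkT (doubleI I) ((u₂ ++ m) ++ ([] ++ (n' ++ v₂))) from congrArg _ (by simp)]
            exact rwG_of_delStep hsym hD


theorem lenT_mkT (w : List (S ⊕ S)) : lenT (doubleI I) (mkT (doubleI I) w) = w.length := rfl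

theorem len_reducing {x y : Trace (doubleI I)} (h : RwG I x y) :
    lenT (doubleI I) y < lenT (doubleI I) x := by
  obtain ⟨a, u, v, hx, hy⟩ := h
  subst hy
  rcases hx with hx | hx <;> subst hx <;> simp [lenT_mkT] <;> omega

theorem strong_confluence (hirr : ∀ a, ¬ I a a) (hsym : ∀ a b, I a b → I b a)
    {x y z : Trace (doubleI I)} (hy : RwG I x y) (hz : RwG I x z) :
    ∃ w, (RwG I y w ∨ y = w) ∧ (RwG I z w ∨ z = w) := by
  obtain ⟨a, u, v, hx, hy'⟩ := hy
  subst hy'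
  rcases hx with hx | hx
  · obtain ⟨r₂, hd₂, hr₂⟩ := delStep_of_rwG hirr hsym hz hx.symm
    have hd₂' : DelStep I (u ++ Sum.inl a :: bar (Sum.inl a) :: v) r₂ := hd₂
    rcases strong_conf_core hirr hsym hd₂' with heq | ⟨y', h1, h2⟩
    · exact ⟨mkT (doubleI I) (u ++ v), Or.inr rfl, Or.inr ((heq.trans hr₂).symm)⟩
    · exact ⟨y', Or.inl h1, Or.inl (hr₂ ▸ h2)⟩
  · obtain ⟨r₂, hd₂, hr₂⟩ := delStep_of_rwG hirr hsym hz hx.symm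
    have hd₂' : DelStep I (u ++ Sum.inr a :: bar (Sum.inr a) :: v) r₂ := hd₂
    rcases strong_conf_core hirr hsym hd₂' with heq | ⟨y', h1, h2⟩
    · exact ⟨mkT (doubleI I) (u ++ v), Or.inr rfl, Or.inr ((heq.trans hr₂).symm)⟩
    · exact ⟨y', Or.inl h1, Or.inl (hr₂ ▸ h2)⟩

theorem cr_local (hirr : ∀ a, ¬ I a a) (hsym : ∀ a b, I a b → I b a) :
    ∀ a b c : Trace (doubleI I), RwG I a b → RwG I a c →
      ∃ d, Relation.ReflGen (RwG I) b d ∧ Relation.ReflTransGen (RwG I) c d := by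
  intro a b c hb hc
  obtain ⟨w, h1, h2⟩ := strong_confluence hirr hsym hb hc
  refine ⟨w, ?_, ?_⟩
  · rcases h1 with h1 | h1
    · exact Relation.ReflGen.single h1
    · exact h1 ▸ Relation.ReflGen.refl
  · rcases h2 with h2 | h2
    · exact Relation.ReflTransGen.single h2
    · exact h2 ▸ Relation.ReflTransGen.refl

theorem rtg_lenT_le {x y : Trace (doubleI I)} (h : Relation.ReflTransGen (RwG I) x y) :
    lenT (doubleI I) y ≤ lenT (doubleI I) x := by
  induction h with
  | refl => exact le_refl _
  | tail _ hbc ih => exact le_trans (le_of_lt (len_reducing hbc)) ih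

theorem exists_nf (x : Trace (doubleI I)) :
    ∃ n, IrrG I n ∧ Relation.ReflTransGen (RwG I) x n := by
  have key : ∀ N (x : Trace (doubleI I)), lenT (doubleI I) x < N →
      ∃ n, IrrG I n ∧ Relation.ReflTransGen (RwG I) x n := by
    intro N
    induction N with
    | zero => intro x hx; omega
    | succ N ih =>
        intro x hx
        by_cases h : ∃ y, RwG I x y
        · obtain ⟨y, hy⟩ := h
          have hlt := len_reducing hy
          obtain ⟨n, hn, hr⟩ := ih y (by omega)
          exact ⟨n, hn, Relation.ReflTransGen.head hy hr⟩
        · exact ⟨x, fun y hy => h ⟨y, hy⟩, Relation.ReflTransGen.refl⟩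
  exact key (lenT (doubleI I) x + 1) x (by omega)

theorem irr_rtg_eq {n d : Trace (doubleI I)} (hn : IrrG I n)
    (h : Relation.ReflTransGen (RwG I) n d) : n = d := by
  rcases Relation.ReflTransGen.cases_head h with rfl | ⟨c, hc, _⟩
  · rfl
  · exact absurd hc (hn c)

theorem nf_unique (hirr : ∀ a, ¬ I a a) (hsym : ∀ a b, I a b → I b a)
    {x n₁ n₂ : Trace (doubleI I)} (h1 : Relation.ReflTransGen (RwG I) x n₁)
    (h2 : Relation.ReflTransGen (RwG I) x n₂) (hi1 : IrrG I n₁) (hi2 : IrrG I n₂) :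
    n₁ = n₂ := by
  obtain ⟨d, j1, j2⟩ := Relation.church_rosser (cr_local hirr hsym) h1 h2
  exact (irr_rtg_eq hi1 j1).trans (irr_rtg_eq hi2 j2).symm

theorem join_of_eqvGen (hirr : ∀ a, ¬ I a a) (hsym : ∀ a b, I a b → I b a)
    {x y : Trace (doubleI I)} (h : Relation.EqvGen (RwG I) x y) :
    Relation.Join (Relation.ReflTransGen (RwG I)) x y := by
  have hequiv := Relation.equivalence_join_reflTransGen (r := RwG I) (cr_local hirr hsym)
  induction h with
  | rel a b hab => exact ⟨b, Relation.ReflTransGen.single hab, Relation.ReflTransGen.refl⟩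
  | refl a => exact hequiv.refl a
  | symm a b _ ih => exact hequiv.symm ih
  | trans a b c _ _ ih1 ih2 => exact hequiv.trans ih1 ih2



variable (I) in
def eL : S ⊕ S → PresentedGroup (ggRels I) :=
  Sum.elim (fun a => PresentedGroup.of (rels := ggRels I) a)
    (fun a => (PresentedGroup.of (rels := ggRels I) a)⁻¹)

theorem ggEval_def (w : List (S ⊕ S)) : ggEval I w = (w.map (eL I)).prod := rfl

theorem eL_mul_eL_bar (x : S ⊕ S) : eL I x * eL I (bar x) = 1 := by
  cases x <;> simp [eL, bar]

theorem commute_of {a b : S} (hI : I a b) :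
    Commute (PresentedGroup.of (rels := ggRels I) a) (PresentedGroup.of (rels := ggRels I) b) := by
  rw [← commutatorElement_eq_one_iff_commute]
  have hmem : (FreeGroup.of a * FreeGroup.of b * (FreeGroup.of a)⁻¹ * (FreeGroup.of b)⁻¹ :
      FreeGroup S) ∈ ggRels I := ⟨a, b, hI, rfl⟩
  have h1 : PresentedGroup.mk (ggRels I)
      (FreeGroup.of a * FreeGroup.of b * (FreeGroup.of a)⁻¹ * (FreeGroup.of b)⁻¹) = 1 :=
    (QuotientGroup.eq_one_iff _).2 (Subgroup.subset_normalClosure hmem)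
  rw [map_mul, map_mul, map_inv, map_inv] at h1
  simpa [commutatorElement_def, PresentedGroup.of] using h1

theorem commute_eL {x z : S ⊕ S} (h : doubleI I x z) : Commute (eL I x) (eL I z) := by
  cases x with
  | inl a =>
      cases z with
      | inl b =>
          simp only [eL, Sum.elim_inl]
          exact commute_of (a := a) (b := b) h
      | inr b =>
          simp only [eL, Sum.elim_inl, Sum.elim_inr]
          exact (commute_of (a := a) (b := b) h).inv_right
  | inr a =>
      cases z with
      | inl b =>
          simp only [eL, Sum.elim_inl, Sum.elim_inr]
          exact (commute_of (a := a) (b := b) h).inv_left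
      | inr b =>
          simp only [eL, Sum.elim_inr]
          exact ((commute_of (a := a) (b := b) h).inv_left).inv_right

theorem ggEval_swap {u v : List (S ⊕ S)} (h : swapStep (doubleI I) u v) :
    ggEval I u = ggEval I v := by
  obtain ⟨p, s, a, b, hab, hu, hv⟩ := h
  subst hu hv
  simp only [ggEval_def, List.map_append, List.map_cons, List.prod_append, List.prod_cons]
  rw [← mul_assoc (eL I a), (commute_eL hab).eq, mul_assoc]

theorem ggEval_teq {u v : List (S ⊕ S)} (h : Relation.EqvGen (swapStep (doubleI I)) u v) :
    ggEval I u = ggEval I v := by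
  induction h with
  | rel a b hab => exact ggEval_swap hab
  | refl a => rfl
  | symm a b _ ih => exact ih.symm
  | trans a b c _ _ ih1 ih2 => exact ih1.trans ih2

theorem ggEval_adjacent (u v : List (S ⊕ S)) (x : S ⊕ S) :
    ggEval I (u ++ x :: bar x :: v) = ggEval I (u ++ v) := by
  simp only [ggEval_def, List.map_append, List.map_cons, List.prod_append, List.prod_cons]
  rw [← mul_assoc (eL I x), eL_mul_eL_bar, one_mul]

theorem ggEval_del {w r : List (S ⊕ S)} (hsym : ∀ a b, I a b → I b a) (h : DelStep I w r) :
    ggEval I w = ggEval I r := by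
  obtain ⟨u, g, v, x, hall, hw, hr⟩ := h
  subst hw hr
  have hblock : Relation.EqvGen (swapStep (doubleI I)) (g ++ bar x :: v) (bar x :: (g ++ v)) :=
    teq_block (fun a b hh => dI_symm hsym hh) g (bar x) v
      (fun z hz => (dI_bar_left x z).symm ▸ hall z hz)
  have ht := teq_append (u ++ [x]) [] hblock
  simp only [List.append_nil] at ht
  have h1 := ggEval_teq (I := I) ht
  have h2 := ggEval_adjacent (I := I) u (g ++ v) x
  rw [show u ++ [x] ++ (g ++ bar x :: v) = u ++ x :: (g ++ bar x :: v) from by simp] at h1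
  rw [show u ++ [x] ++ (bar x :: (g ++ v)) = u ++ x :: bar x :: (g ++ v) from by simp] at h1
  exact h1.trans h2

variable (I) in
def Et : Trace (doubleI I) → PresentedGroup (ggRels I) :=
  Quotient.lift (ggEval I) (fun _ _ h => ggEval_teq h)

theorem Et_mkT (w : List (S ⊕ S)) : Et I (mkT (doubleI I) w) = ggEval I w := rfl

theorem Et_rw {x y : Trace (doubleI I)} (h : RwG I x y) : Et I x = Et I y := by
  obtain ⟨a, u, v, hx, hy⟩ := h
  subst hy
  rcases hx with hx | hx <;> subst hx
  · exact ggEval_adjacent u v (Sum.inl a)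
  · exact ggEval_adjacent u v (Sum.inr a)

theorem Et_rtg {x y : Trace (doubleI I)} (h : Relation.ReflTransGen (RwG I) x y) :
    Et I x = Et I y := by
  induction h with
  | refl => rfl
  | tail _ hbc ih => exact ih.trans (Et_rw hbc)

variable (I) in
def QR : List (S ⊕ S) → List (S ⊕ S) → Prop :=
  fun w w' => swapStep (doubleI I) w w' ∨ DelStep I w w'

variable (I) in
def QS : Setoid (List (S ⊕ S)) := Relation.EqvGen.setoid (QR I)

variable (I) in
def QG : Type _ := Quotient (QS I)

variable (I) in
def qmk (w : List (S ⊕ S)) : QG I := Quotient.mk (QS I) w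

theorem qmk_eq_qmk {u v : List (S ⊕ S)} : qmk I u = qmk I v ↔ Relation.EqvGen (QR I) u v :=
  ⟨fun h => Quotient.exact h, fun h => Quotient.sound h⟩

theorem delStep_append (p s : List (S ⊕ S)) {u v : List (S ⊕ S)} (h : DelStep I u v) :
    DelStep I (p ++ u ++ s) (p ++ v ++ s) := by
  obtain ⟨u₁, g, v₁, x, hall, hu, hv⟩ := h
  exact ⟨p ++ u₁, g, v₁ ++ s, x, hall, by simp [hu], by simp [hv]⟩

theorem qr_append (p s : List (S ⊕ S)) {u v : List (S ⊕ S)}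
    (h : Relation.EqvGen (QR I) u v) :
    Relation.EqvGen (QR I) (p ++ u ++ s) (p ++ v ++ s) := by
  induction h with
  | rel a b hab =>
      rcases hab with hab | hab
      · exact Relation.EqvGen.rel _ _ (Or.inl (swapStep_append p s hab))
      · exact Relation.EqvGen.rel _ _ (Or.inr (delStep_append p s hab))
  | refl a => exact Relation.EqvGen.refl _
  | symm a b _ ih => exact Relation.EqvGen.symm _ _ ih
  | trans a b c _ _ ih1 ih2 => exact Relation.EqvGen.trans _ _ _ ih1 ih2

theorem qr_append_left (p : List (S ⊕ S)) {u v : List (S ⊕ S)}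
    (h : Relation.EqvGen (QR I) u v) : Relation.EqvGen (QR I) (p ++ u) (p ++ v) := by
  simpa using qr_append p [] h

theorem qr_append_right (s : List (S ⊕ S)) {u v : List (S ⊕ S)}
    (h : Relation.EqvGen (QR I) u v) : Relation.EqvGen (QR I) (u ++ s) (v ++ s) := by
  simpa using qr_append [] s h

def invL : List (S ⊕ S) → List (S ⊕ S) := fun w => (w.map bar).reverse

theorem qr_invL {u v : List (S ⊕ S)} (hsym : ∀ a b, I a b → I b a)
    (h : Relation.EqvGen (QR I) u v) :
    Relation.EqvGen (QR I) (invL u) (invL v) := by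
  induction h with
  | rel a b hab =>
      rcases hab with ⟨p, s, c, d, hcd, ha, hb⟩ | ⟨u₁, g, v₁, x, hall, ha, hb⟩
      · subst ha hb
        refine Relation.EqvGen.rel _ _ (Or.inl ⟨(s.map bar).reverse, (p.map bar).reverse,
          bar d, bar c, ?_, by simp [invL], by simp [invL]⟩)
        rw [dI_bar_left, dI_bar_right]
        exact dI_symm hsym hcd
      · subst ha hb
        refine Relation.EqvGen.rel _ _ (Or.inr ⟨(v₁.map bar).reverse, (g.map bar).reverse,
          (u₁.map bar).reverse, x, ?_, by simp [invL], by simp [invL]⟩)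
        intro z hz
        simp only [List.mem_reverse, List.mem_map] at hz
        obtain ⟨z₀, hz₀, rfl⟩ := hz
        rw [dI_bar_right]
        exact hall z₀ hz₀
  | refl a => exact Relation.EqvGen.refl _
  | symm a b _ ih => exact Relation.EqvGen.symm _ _ ih
  | trans a b c _ _ ih1 ih2 => exact Relation.EqvGen.trans _ _ _ ih1 ih2

theorem qr_invL_mul (w : List (S ⊕ S)) :
    Relation.EqvGen (QR I) (invL w ++ w) [] := by
  induction w with
  | nil => exact Relation.EqvGen.refl _
  | cons x w ih =>
      have h1 : Relation.EqvGen (QR I) (invL (x :: w) ++ (x :: w))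
          ((w.map bar).reverse ++ w) := by
        refine Relation.EqvGen.rel _ _ (Or.inr ⟨(w.map bar).reverse, [], w, bar x, by simp,
          by simp [invL], by simp⟩)
      exact Relation.EqvGen.trans _ _ _ h1 ih

variable (I) in
def qgroup (hsym : ∀ a b, I a b → I b a) : Group (QG I) where
  mul := Quotient.lift₂ (fun u v => qmk I (u ++ v)) (by
    intro a₁ b₁ a₂ b₂ h₁ h₂
    refine Quotient.sound ?_
    exact Relation.EqvGen.trans _ _ _ (qr_append_right b₁ h₁) (qr_append_left a₂ h₂))
  one := qmk I []
  inv := Quotient.lift (fun w => qmk I (invL w)) (by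
    intro a b h
    exact Quotient.sound (qr_invL hsym h))
  mul_assoc := by
    intro a b c
    induction a using Quotient.inductionOn
    induction b using Quotient.inductionOn
    induction c using Quotient.inductionOn
    exact congrArg (qmk I) (List.append_assoc _ _ _)
  one_mul := by
    intro a
    induction a using Quotient.inductionOn
    rfl
  mul_one := by
    intro a
    induction a using Quotient.inductionOn
    exact congrArg (qmk I) (List.append_nil _)
  inv_mul_cancel := by
    intro a
    induction a using Quotient.inductionOn
    exact Quotient.sound (qr_invL_mul _)

section Phi

variable (hsym : ∀ a b, I a b → I b a)

theorem qrels_one : ∀ r ∈ ggRels I,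
    letI : Group (QG I) := qgroup I hsym
    FreeGroup.lift (fun a => qmk I [Sum.inl a]) r = 1 := by
  letI : Group (QG I) := qgroup I hsym
  rintro r ⟨a, b, hI, rfl⟩
  simp only [map_mul, map_inv, FreeGroup.lift_apply_of]
  show qmk I ([Sum.inl a, Sum.inl b, Sum.inr a, Sum.inr b]) = qmk I []
  refine Quotient.sound ?_
  have s1 : swapStep (doubleI I) [Sum.inl a, Sum.inl b, Sum.inr a, Sum.inr b]
      [Sum.inl a, Sum.inr a, Sum.inl b, Sum.inr b] :=
    ⟨[Sum.inl a], [Sum.inr b], Sum.inl b, Sum.inr a, hsym _ _ hI, rfl, rfl⟩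
  have s2 : DelStep I [Sum.inl a, Sum.inr a, Sum.inl b, Sum.inr b] [Sum.inl b, Sum.inr b] :=
    ⟨[], [], [Sum.inl b, Sum.inr b], Sum.inl a, by simp, rfl, rfl⟩
  have s3 : DelStep I [Sum.inl b, Sum.inr b] [] :=
    ⟨[], [], [], Sum.inl b, by simp, rfl, rfl⟩
  exact Relation.EqvGen.trans _ _ _ (Relation.EqvGen.rel _ _ (Or.inl s1))
    (Relation.EqvGen.trans _ _ _ (Relation.EqvGen.rel _ _ (Or.inr s2))
      (Relation.EqvGen.rel _ _ (Or.inr s3)))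

variable (I) in
def phi : letI : Group (QG I) := qgroup I hsym
    PresentedGroup (ggRels I) →* QG I :=
  letI : Group (QG I) := qgroup I hsym
  PresentedGroup.toGroup (qrels_one hsym)

theorem phi_ggEval (w : List (S ⊕ S)) : phi I hsym (ggEval I w) = qmk I w := by
  letI : Group (QG I) := qgroup I hsym
  induction w with
  | nil =>
      show phi I hsym 1 = qmk I []
      rw [map_one]
      rfl
  | cons x w ih =>
      have hc : ggEval I (x :: w) = eL I x * ggEval I w := by
        simp [ggEval_def]
      rw [hc, map_mul, ih]
      have hx : phi I hsym (eL I x) = qmk I [x] := by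
        cases x with
        | inl a =>
            show phi I hsym (PresentedGroup.of a) = qmk I [Sum.inl a]
            exact PresentedGroup.toGroup.of _
        | inr a =>
            show phi I hsym (PresentedGroup.of a)⁻¹ = qmk I [Sum.inr a]
            rw [map_inv]
            rw [show phi I hsym (PresentedGroup.of a) = qmk I [Sum.inl a] from
              PresentedGroup.toGroup.of _]
            rfl
      rw [hx]
      rfl

end Phi

theorem eqvGen_rw_of_qr (hsym : ∀ a b, I a b → I b a) {u v : List (S ⊕ S)}
    (h : Relation.EqvGen (QR I) u v) :
    Relation.EqvGen (RwG I) (mkT (doubleI I) u) (mkT (doubleI I) v) := by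
  induction h with
  | rel a b hab =>
      rcases hab with hab | hab
      · exact (mkT_eq_mkT.2 (Relation.EqvGen.rel _ _ hab)) ▸ Relation.EqvGen.refl _
      · exact Relation.EqvGen.rel _ _ (rwG_of_delStep hsym hab)
  | refl a => exact Relation.EqvGen.refl _
  | symm a b _ ih => exact Relation.EqvGen.symm _ _ ih
  | trans a b c _ _ ih1 ih2 => exact Relation.EqvGen.trans _ _ _ ih1 ih2

end GGAux

/-- The trace rewriting system `S_G = {aā → 1, āa → 1}` on `M(Γ, I_Γ)` is
length-reducing and strongly confluent, and its irreducible traces give unique geodesic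
normal forms for the graph group `G(Σ, I)`. -/
theorem ggTraceSystem_confluent_normalForms {S : Type*} [DecidableEq S]
    (I : S → S → Prop) (hirr : ∀ a, ¬ I a a) (hsym : ∀ a b, I a b → I b a) :
    (∀ x y : Trace (doubleI I), RwG I x y → lenT (doubleI I) y < lenT (doubleI I) x) ∧
    (∀ x y z : Trace (doubleI I), RwG I x y → RwG I x z → y ≠ z →
      ∃ w : Trace (doubleI I), (RwG I y w ∨ y = w) ∧ (RwG I z w ∨ z = w)) ∧
    (∀ x : Trace (doubleI I), ∃! n : Trace (doubleI I),
      IrrG I n ∧ Relation.ReflTransGen (RwG I) x n) ∧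
    (∀ u v : List (S ⊕ S),
      Relation.ReflTransGen (RwG I) (mkT (doubleI I) u) (mkT (doubleI I) v) →
        ggEval I v = ggEval I u) ∧
    (∀ u v : List (S ⊕ S), IrrG I (mkT (doubleI I) u) → IrrG I (mkT (doubleI I) v) →
      (ggEval I u = ggEval I v ↔ mkT (doubleI I) u = mkT (doubleI I) v)) ∧
    (∀ u v : List (S ⊕ S), IrrG I (mkT (doubleI I) u) → ggEval I u = ggEval I v →
      u.length ≤ v.length) := by
  
  classical
  refine ⟨fun x y h => GGAux.len_reducing h, ?_, ?_, ?_, ?_, ?_⟩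
  · intro x y z hy hz _
    exact GGAux.strong_confluence hirr hsym hy hz
  · intro x
    obtain ⟨n, hn, hr⟩ := GGAux.exists_nf x
    exact ⟨n, ⟨hn, hr⟩, fun m ⟨hm, hrm⟩ => GGAux.nf_unique hirr hsym hrm hr hm hn⟩
  · intro u v h
    exact (GGAux.Et_rtg h).symm
  · intro u v hu hv
    constructor
    · intro heq
      have hq : GGAux.qmk I u = GGAux.qmk I v := by
        have h2 := congrArg (GGAux.phi I hsym) heq
        rwa [GGAux.phi_ggEval, GGAux.phi_ggEval] at h2
      have hrw := GGAux.eqvGen_rw_of_qr hsym (GGAux.qmk_eq_qmk.1 hq)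
      obtain ⟨d, h1, h2⟩ := GGAux.join_of_eqvGen hirr hsym hrw
      exact (GGAux.irr_rtg_eq hu h1).trans (GGAux.irr_rtg_eq hv h2).symm
    · intro heq
      exact GGAux.ggEval_teq (GGAux.mkT_eq_mkT.1 heq)
  · intro u v hu heq
    have hq : GGAux.qmk I u = GGAux.qmk I v := by
      have h2 := congrArg (GGAux.phi I hsym) heq
      rwa [GGAux.phi_ggEval, GGAux.phi_ggEval] at h2
    have hrw := GGAux.eqvGen_rw_of_qr hsym (GGAux.qmk_eq_qmk.1 hq)
    obtain ⟨d, h1, h2⟩ := GGAux.join_of_eqvGen hirr hsym hrw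
    have h3 := GGAux.irr_rtg_eq hu h1
    have h4 := GGAux.rtg_lenT_le h2
    rw [← h3] at h4
    simpa [GGAux.lenT_mkT] using h4
end
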